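/- An order-N deformation (μ_t, φ_t) of a 3-LieDer pair (L, φ_L) extends to an order-(N+1) deformation if and only if the obstruction class [(Ob³, Ob²)] ∈ H³_{3-LieDer}(L, L) vanishes; explicitly, (μ_t + t^{N+1}μ_{N+1}, φ_t + t^{N+1}φ_{N+1}) is an order-(N+1) deformation iff d(μ_{N+1}) = Ob³ and d(φ_{N+1}) + δ(μ_{N+1}) = Ob². -/

import Mathlib

/-- A 3-Lie algebra: a module with a trilinear skew-symmetric bracket satisfying
the fundamental (Filippov) identity. -/
structure ThreeLieAlgebra (K L : Type) [Field K] [AddCommGroup L] [Module K L] where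
  br : L →ₗ[K] L →ₗ[K] L →ₗ[K] L
  skew₁₂ : ∀ x y z, br x y z = - br y x z
  skew₂₃ : ∀ x y z, br x y z = - br x z y
  fund : ∀ x y u v w,
    br x y (br u v w) = br (br x y u) v w + br u (br x y v) w + br u v (br x y w)

/-- A derivation of a 3-Lie algebra. -/
def IsDer {K L : Type} [Field K] [AddCommGroup L] [Module K L]
    (A : ThreeLieAlgebra K L) (φ : L →ₗ[K] L) : Prop :=
  ∀ x y z, φ (A.br x y z) = A.br (φ x) y z + A.br x (φ y) z + A.br x y (φ z)

/-- `Cochain L M n` models `C^{n+1}(L,M) = Hom((∧²L)^{⊗ n} ⊗ L, M)` as raw maps: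
`n` wedge-pair slots plus one final slot. -/
abbrev Cochain (L M : Type) (n : ℕ) : Type := (Fin n → L × L) → L → M

/-- The genuine (multilinear, alternating in each pair) cochain condition. -/
def IsCochain (K : Type) [Field K] {L M : Type} [AddCommGroup L] [Module K L]
    [AddCommGroup M] [Module K M] {n : ℕ} (f : Cochain L M n) : Prop :=
  (∀ (X : Fin n → L × L) (j : Fin n) (a a' y : L) (z : L),
      f (Function.update X j (a + a', y)) z
        = f (Function.update X j (a, y)) z + f (Function.update X j (a', y)) z) ∧
  (∀ (X : Fin n → L × L) (j : Fin n) (c : K) (a y z : L),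
      f (Function.update X j (c • a, y)) z = c • f (Function.update X j (a, y)) z) ∧
  (∀ (X : Fin n → L × L) (j : Fin n) (x b b' z : L),
      f (Function.update X j (x, b + b')) z
        = f (Function.update X j (x, b)) z + f (Function.update X j (x, b')) z) ∧
  (∀ (X : Fin n → L × L) (j : Fin n) (c : K) (x b z : L),
      f (Function.update X j (x, c • b)) z = c • f (Function.update X j (x, b)) z) ∧
  (∀ (X : Fin n → L × L) (z z' : L), f X (z + z') = f X z + f X z') ∧
  (∀ (X : Fin n → L × L) (c : K) (z : L), f X (c • z) = c • f X z) ∧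
  (∀ (X : Fin n → L × L) (j : Fin n) (a y z : L),
      f (Function.update X j (a, y)) z = - f (Function.update X j (y, a)) z)

/-- The Rotkiewicz coboundary of 3-Lie algebra cohomology, written for raw cochains. -/
def dCob {L M : Type} [AddCommGroup L] [AddCommGroup M]
    (br : L → L → L → L) (ρ : L → L → M → M) {n : ℕ}
    (f : Cochain L M n) : Cochain L M (n + 1) := fun X z =>
  ((-1 : ℤ) ^ n •
      ρ (X (Fin.last n)).2 z (f (fun i => X i.castSucc) (X (Fin.last n)).1))
  + ((-1 : ℤ) ^ n •
      ρ z (X (Fin.last n)).1 (f (fun i => X i.castSucc) (X (Fin.last n)).2))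
  + (∑ j : Fin (n + 1), (-1 : ℤ) ^ (j : ℕ) •
      ρ (X j).1 (X j).2 (f (fun i => X (j.succAbove i)) z))
  + (∑ j : Fin (n + 1), (-1 : ℤ) ^ ((j : ℕ) + 1) •
      f (fun i => X (j.succAbove i)) (br (X j).1 (X j).2 z))
  + (∑ j : Fin (n + 1), ∑ k : Fin (n + 1),
      if (j : ℕ) < (k : ℕ) then
        (-1 : ℤ) ^ ((j : ℕ) + 1) •
          (f (fun i => (Function.update X k (br (X j).1 (X j).2 (X k).1, (X k).2))
                (j.succAbove i)) z
           + f (fun i => (Function.update X k ((X k).1, br (X j).1 (X j).2 (X k).2))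
                (j.succAbove i)) z)
      else 0)

/-- The operator `δ f = Σᵢ f ∘ (Id ⊗ ⋯ ⊗ φ_L ⊗ ⋯ ⊗ Id) - φ_M ∘ f`. -/
def deltaOp {L M : Type} [AddCommGroup M] (φL : L → L) (φM : M → M) {n : ℕ}
    (f : Cochain L M n) : Cochain L M n := fun X z =>
  (∑ j : Fin n,
      (f (Function.update X j (φL (X j).1, (X j).2)) z
       + f (Function.update X j ((X j).1, φL (X j).2)) z))
  + f X (φL z) - φM (f X z)

/-- The degree-`n` component of the 3-Lie deformation equation for a family `μ`. -/
def DeformEq {K L : Type} [Field K] [AddCommGroup L] [Module K L]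
    (μ : ℕ → (L →ₗ[K] L →ₗ[K] L →ₗ[K] L)) (n : ℕ) : Prop :=
  ∀ x y z v w : L,
    ∑ ij ∈ Finset.HasAntidiagonal.antidiagonal n, μ ij.1 x y (μ ij.2 z v w)
      = ∑ ij ∈ Finset.HasAntidiagonal.antidiagonal n,
          (μ ij.1 (μ ij.2 x y z) v w + μ ij.1 z (μ ij.2 x y v) w
            + μ ij.1 z v (μ ij.2 x y w))

/-- The degree-`n` component of the equation saying `φ_t` is a derivation for `μ_t`. -/
def DerivEq {K L : Type} [Field K] [AddCommGroup L] [Module K L]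
    (μ : ℕ → (L →ₗ[K] L →ₗ[K] L →ₗ[K] L)) (φ : ℕ → (L →ₗ[K] L)) (n : ℕ) : Prop :=
  ∀ x y z : L,
    ∑ ij ∈ Finset.HasAntidiagonal.antidiagonal n, φ ij.1 (μ ij.2 x y z)
      = ∑ ij ∈ Finset.HasAntidiagonal.antidiagonal n,
          (μ ij.1 (φ ij.2 x) y z + μ ij.1 x (φ ij.2 y) z + μ ij.1 x y (φ ij.2 z))

/-- A formal one-parameter deformation `(μ_t = Σ tⁱ μ_i, φ_t = Σ tⁱ φ_i)` of a
3-LieDer pair `(L, φL)`, encoded by its families of coefficients. -/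
structure IsFormalDeformation {K L : Type} [Field K] [AddCommGroup L] [Module K L]
    (A : ThreeLieAlgebra K L) (φL : L →ₗ[K] L)
    (μ : ℕ → (L →ₗ[K] L →ₗ[K] L →ₗ[K] L)) (φ : ℕ → (L →ₗ[K] L)) : Prop where
  init_br : μ 0 = A.br
  init_der : φ 0 = φL
  skew₁₂ : ∀ i x y z, μ i x y z = - μ i y x z
  skew₂₃ : ∀ i x y z, μ i x y z = - μ i x z y
  deform : ∀ n, DeformEq μ n
  deriv : ∀ n, DerivEq μ φ n

/-- An order-`N` one-parameter deformation of a 3-LieDer pair `(L, φL)`. -/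
structure IsDeformationOfOrder {K L : Type} [Field K] [AddCommGroup L] [Module K L]
    (N : ℕ) (A : ThreeLieAlgebra K L) (φL : L →ₗ[K] L)
    (μ : ℕ → (L →ₗ[K] L →ₗ[K] L →ₗ[K] L)) (φ : ℕ → (L →ₗ[K] L)) : Prop where
  init_br : μ 0 = A.br
  init_der : φ 0 = φL
  bound : ∀ i, N < i → μ i = 0 ∧ φ i = 0
  skew₁₂ : ∀ i x y z, μ i x y z = - μ i y x z
  skew₂₃ : ∀ i x y z, μ i x y z = - μ i x z y
  deform : ∀ n ≤ N, DeformEq μ n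
  deriv : ∀ n ≤ N, DerivEq μ φ n

/-- The obstruction 3-cochain `Ob³ = -½ Σ_{i+j=N+1, i,j>0} [μ_i, μ_j]`, written out
concretely on `(x∧y, z∧v, w)`. -/
def Ob3 {K L : Type} [Field K] [AddCommGroup L] [Module K L]
    (μ : ℕ → (L →ₗ[K] L →ₗ[K] L →ₗ[K] L)) (N : ℕ) : Cochain L L 2 :=
  fun X w =>
    ∑ ij ∈ (Finset.HasAntidiagonal.antidiagonal (N + 1)).filter (fun q => q.1 ≠ 0 ∧ q.2 ≠ 0),
      (μ ij.1 (μ ij.2 (X 0).1 (X 0).2 (X 1).1) (X 1).2 w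
        + μ ij.1 (X 1).1 (μ ij.2 (X 0).1 (X 0).2 (X 1).2) w
        + μ ij.1 (X 1).1 (X 1).2 (μ ij.2 (X 0).1 (X 0).2 w)
        - μ ij.1 (X 0).1 (X 0).2 (μ ij.2 (X 1).1 (X 1).2 w))

/-- The obstruction 2-cochain `Ob² = -Σ_{i+j=N+1, i,j>0} [φ_i, μ_j]`, written out
concretely on `(x∧y, z)`. -/
def Ob2 {K L : Type} [Field K] [AddCommGroup L] [Module K L]
    (μ : ℕ → (L →ₗ[K] L →ₗ[K] L →ₗ[K] L)) (φ : ℕ → (L →ₗ[K] L)) (N : ℕ) :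
    Cochain L L 1 :=
  fun X z =>
    ∑ ij ∈ (Finset.HasAntidiagonal.antidiagonal (N + 1)).filter (fun q => q.1 ≠ 0 ∧ q.2 ≠ 0),
      (φ ij.1 (μ ij.2 (X 0).1 (X 0).2 z)
        - μ ij.1 (φ ij.2 (X 0).1) (X 0).2 z
        - μ ij.1 (X 0).1 (φ ij.2 (X 0).2) z
        - μ ij.1 (X 0).1 (X 0).2 (φ ij.2 z))


/-! ### Auxiliary lemmas for the obstruction theorem -/

lemma split3 {M : Type} [AddCommGroup M] (N : ℕ) (F : ℕ × ℕ → M) :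
    ∑ ij ∈ Finset.HasAntidiagonal.antidiagonal (N+1), F ij
      = F (0, N+1) + F (N+1, 0)
        + ∑ ij ∈ (Finset.HasAntidiagonal.antidiagonal (N+1)).filter (fun q => q.1 ≠ 0 ∧ q.2 ≠ 0), F ij := by
  rw [← Finset.sum_filter_add_sum_filter_not (Finset.HasAntidiagonal.antidiagonal (N+1))
      (fun q => q.1 ≠ 0 ∧ q.2 ≠ 0) F]
  have h : (Finset.HasAntidiagonal.antidiagonal (N+1)).filter (fun q => ¬(q.1 ≠ 0 ∧ q.2 ≠ 0))
      = {(0, N+1), (N+1, 0)} := by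
    ext ⟨a, b⟩
    simp only [Finset.mem_filter, Finset.HasAntidiagonal.mem_antidiagonal, Finset.mem_insert,
      Finset.mem_singleton, Prod.mk.injEq, not_and_or, not_ne_iff]
    omega
  rw [h, Finset.sum_insert (by simp), Finset.sum_singleton]
  abel

lemma dCob_one_eval {L : Type} [AddCommGroup L] (br ρ : L → L → L → L) (f : L → L → L → L)
    (X : Fin 2 → L × L) (w : L) :
    dCob br ρ ((fun X z => f (X 0).1 (X 0).2 z) : Cochain L L 1) X w =
      - ρ (X 1).2 w (f (X 0).1 (X 0).2 (X 1).1)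
      - ρ w (X 1).1 (f (X 0).1 (X 0).2 (X 1).2)
      + ρ (X 0).1 (X 0).2 (f (X 1).1 (X 1).2 w)
      - ρ (X 1).1 (X 1).2 (f (X 0).1 (X 0).2 w)
      - f (X 1).1 (X 1).2 (br (X 0).1 (X 0).2 w)
      + f (X 0).1 (X 0).2 (br (X 1).1 (X 1).2 w)
      - f (br (X 0).1 (X 0).2 (X 1).1) (X 1).2 w
      - f (X 1).1 (br (X 0).1 (X 0).2 (X 1).2) w := by
  simp [dCob, Fin.sum_univ_two, Fin.succAbove, Function.update, Fin.last]
  abel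

lemma dCob_zero_eval {L : Type} [AddCommGroup L] (br ρ : L → L → L → L) (g : L → L)
    (X : Fin 1 → L × L) (z : L) :
    dCob br ρ ((fun _ z => g z) : Cochain L L 0) X z =
      ρ (X 0).2 z (g (X 0).1) + ρ z (X 0).1 (g (X 0).2)
      + ρ (X 0).1 (X 0).2 (g z) - g (br (X 0).1 (X 0).2 z) := by
  simp [dCob, Fin.sum_univ_one, Fin.last]
  abel

lemma delta_one_eval {L : Type} [AddCommGroup L] (φL φM : L → L) (f : L → L → L → L)
    (X : Fin 1 → L × L) (z : L) :
    deltaOp φL φM ((fun X z => f (X 0).1 (X 0).2 z) : Cochain L L 1) X z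
      = f (φL (X 0).1) (X 0).2 z + f (X 0).1 (φL (X 0).2) z
        + f (X 0).1 (X 0).2 (φL z) - φM (f (X 0).1 (X 0).2 z) := by
  simp [deltaOp, Fin.sum_univ_one, Function.update]

lemma key3 {K L : Type} [Field K] [AddCommGroup L] [Module K L]
    (A : ThreeLieAlgebra K L) (N : ℕ) (μ : ℕ → (L →ₗ[K] L →ₗ[K] L →ₗ[K] L))
    (hμ0 : μ 0 = A.br) (f : L →ₗ[K] L →ₗ[K] L →ₗ[K] L) :
    (dCob (fun x y z => A.br x y z) (fun x y m => A.br x y m)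
        ((fun X z => f (X 0).1 (X 0).2 z) : Cochain L L 1) = Ob3 μ N)
    ↔ DeformEq (fun i => if i = N + 1 then f else μ i) (N + 1) := by
  have cyc : ∀ a b c : L, A.br c a b = A.br a b c := by
    intro a b c; rw [A.skew₁₂ c a b, A.skew₂₃ a c b, neg_neg]
  have hne : ¬ (0 : ℕ) = N + 1 := by omega
  have hmem : ∀ ij ∈ (Finset.HasAntidiagonal.antidiagonal (N + 1)).filter (fun q => q.1 ≠ 0 ∧ q.2 ≠ 0),
      ¬ ij.1 = N + 1 ∧ ¬ ij.2 = N + 1 := by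
    intro ij hij
    simp only [Finset.mem_filter, Finset.HasAntidiagonal.mem_antidiagonal] at hij
    omega
  have hpt : ∀ (X : Fin 2 → L × L) (w : L),
      dCob (fun x y z => A.br x y z) (fun x y m => A.br x y m)
          ((fun X z => f (X 0).1 (X 0).2 z) : Cochain L L 1) X w
        - Ob3 μ N X w
      = (∑ ij ∈ Finset.HasAntidiagonal.antidiagonal (N + 1),
            (if ij.1 = N + 1 then f else μ ij.1) (X 0).1 (X 0).2
              ((if ij.2 = N + 1 then f else μ ij.2) (X 1).1 (X 1).2 w))
        - ∑ ij ∈ Finset.HasAntidiagonal.antidiagonal (N + 1),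
            ((if ij.1 = N + 1 then f else μ ij.1)
                ((if ij.2 = N + 1 then f else μ ij.2) (X 0).1 (X 0).2 (X 1).1) (X 1).2 w
              + (if ij.1 = N + 1 then f else μ ij.1) (X 1).1
                  ((if ij.2 = N + 1 then f else μ ij.2) (X 0).1 (X 0).2 (X 1).2) w
              + (if ij.1 = N + 1 then f else μ ij.1) (X 1).1 (X 1).2
                  ((if ij.2 = N + 1 then f else μ ij.2) (X 0).1 (X 0).2 w)) := by
    intro X w
    rw [dCob_one_eval (fun x y z => A.br x y z) (fun x y m => A.br x y m)
        (fun a b c => f a b c) X w]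
    rw [split3 N (fun ij =>
            (if ij.1 = N + 1 then f else μ ij.1) (X 0).1 (X 0).2
              ((if ij.2 = N + 1 then f else μ ij.2) (X 1).1 (X 1).2 w)),
        split3 N (fun ij =>
            ((if ij.1 = N + 1 then f else μ ij.1)
                ((if ij.2 = N + 1 then f else μ ij.2) (X 0).1 (X 0).2 (X 1).1) (X 1).2 w
              + (if ij.1 = N + 1 then f else μ ij.1) (X 1).1
                  ((if ij.2 = N + 1 then f else μ ij.2) (X 0).1 (X 0).2 (X 1).2) w
              + (if ij.1 = N + 1 then f else μ ij.1) (X 1).1 (X 1).2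
                  ((if ij.2 = N + 1 then f else μ ij.2) (X 0).1 (X 0).2 w)))]
    have hmidL :
        (∑ ij ∈ (Finset.HasAntidiagonal.antidiagonal (N + 1)).filter (fun q => q.1 ≠ 0 ∧ q.2 ≠ 0),
            (if ij.1 = N + 1 then f else μ ij.1) (X 0).1 (X 0).2
              ((if ij.2 = N + 1 then f else μ ij.2) (X 1).1 (X 1).2 w))
        = ∑ ij ∈ (Finset.HasAntidiagonal.antidiagonal (N + 1)).filter (fun q => q.1 ≠ 0 ∧ q.2 ≠ 0),
            μ ij.1 (X 0).1 (X 0).2 (μ ij.2 (X 1).1 (X 1).2 w) :=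
      Finset.sum_congr rfl fun ij hij => by
        rw [if_neg (hmem ij hij).1, if_neg (hmem ij hij).2]
    have hmidR :
        (∑ ij ∈ (Finset.HasAntidiagonal.antidiagonal (N + 1)).filter (fun q => q.1 ≠ 0 ∧ q.2 ≠ 0),
            ((if ij.1 = N + 1 then f else μ ij.1)
                ((if ij.2 = N + 1 then f else μ ij.2) (X 0).1 (X 0).2 (X 1).1) (X 1).2 w
              + (if ij.1 = N + 1 then f else μ ij.1) (X 1).1
                  ((if ij.2 = N + 1 then f else μ ij.2) (X 0).1 (X 0).2 (X 1).2) w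
              + (if ij.1 = N + 1 then f else μ ij.1) (X 1).1 (X 1).2
                  ((if ij.2 = N + 1 then f else μ ij.2) (X 0).1 (X 0).2 w)))
        = ∑ ij ∈ (Finset.HasAntidiagonal.antidiagonal (N + 1)).filter (fun q => q.1 ≠ 0 ∧ q.2 ≠ 0),
            (μ ij.1 (μ ij.2 (X 0).1 (X 0).2 (X 1).1) (X 1).2 w
              + μ ij.1 (X 1).1 (μ ij.2 (X 0).1 (X 0).2 (X 1).2) w
              + μ ij.1 (X 1).1 (X 1).2 (μ ij.2 (X 0).1 (X 0).2 w)) :=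
      Finset.sum_congr rfl fun ij hij => by
        rw [if_neg (hmem ij hij).1, if_neg (hmem ij hij).2]
    rw [hmidL, hmidR]
    simp only [if_neg hne, eq_self_iff_true, if_true, hμ0, Ob3]
    rw [Finset.sum_sub_distrib]
    rw [cyc (X 1).2 w (f (X 0).1 (X 0).2 (X 1).1),
        cyc (X 1).1 (f (X 0).1 (X 0).2 (X 1).2) w]
    abel
  constructor
  · intro h x y z v w
    have h2 := hpt ![(x, y), (z, v)] w
    rw [h, sub_self] at h2
    have h3 := sub_eq_zero.mp h2.symm
    simpa using h3
  · intro h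
    funext X w
    have h2 := hpt X w
    have h3 := h (X 0).1 (X 0).2 (X 1).1 (X 1).2 w
    rw [h3, sub_self] at h2
    exact sub_eq_zero.mp h2

lemma key2 {K L : Type} [Field K] [AddCommGroup L] [Module K L]
    (A : ThreeLieAlgebra K L) (φL : L →ₗ[K] L) (N : ℕ)
    (μ : ℕ → (L →ₗ[K] L →ₗ[K] L →ₗ[K] L)) (φ : ℕ → (L →ₗ[K] L))
    (hμ0 : μ 0 = A.br) (hφ0 : φ 0 = φL)
    (f : L →ₗ[K] L →ₗ[K] L →ₗ[K] L) (g : L →ₗ[K] L) :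
    (dCob (fun x y z => A.br x y z) (fun x y m => A.br x y m)
        ((fun _ z => g z) : Cochain L L 0)
      + deltaOp (fun x => φL x) (fun x => φL x)
          ((fun X z => f (X 0).1 (X 0).2 z) : Cochain L L 1)
      = Ob2 μ φ N)
    ↔ DerivEq (fun i => if i = N + 1 then f else μ i)
        (fun i => if i = N + 1 then g else φ i) (N + 1) := by
  have cyc : ∀ a b c : L, A.br c a b = A.br a b c := by
    intro a b c; rw [A.skew₁₂ c a b, A.skew₂₃ a c b, neg_neg]
  have hne : ¬ (0 : ℕ) = N + 1 := by omega
  have hmem : ∀ ij ∈ (Finset.HasAntidiagonal.antidiagonal (N + 1)).filter (fun q => q.1 ≠ 0 ∧ q.2 ≠ 0),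
      ¬ ij.1 = N + 1 ∧ ¬ ij.2 = N + 1 := by
    intro ij hij
    simp only [Finset.mem_filter, Finset.HasAntidiagonal.mem_antidiagonal] at hij
    omega
  have hpt : ∀ (X : Fin 1 → L × L) (z : L),
      (dCob (fun x y z => A.br x y z) (fun x y m => A.br x y m)
          ((fun _ z => g z) : Cochain L L 0)
        + deltaOp (fun x => φL x) (fun x => φL x)
            ((fun X z => f (X 0).1 (X 0).2 z) : Cochain L L 1)) X z
        - Ob2 μ φ N X z
      = (∑ ij ∈ Finset.HasAntidiagonal.antidiagonal (N + 1),
            ((if ij.1 = N + 1 then f else μ ij.1)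
                ((if ij.2 = N + 1 then g else φ ij.2) (X 0).1) (X 0).2 z
              + (if ij.1 = N + 1 then f else μ ij.1) (X 0).1
                  ((if ij.2 = N + 1 then g else φ ij.2) (X 0).2) z
              + (if ij.1 = N + 1 then f else μ ij.1) (X 0).1 (X 0).2
                  ((if ij.2 = N + 1 then g else φ ij.2) z)))
        - ∑ ij ∈ Finset.HasAntidiagonal.antidiagonal (N + 1),
            (if ij.1 = N + 1 then g else φ ij.1)
              ((if ij.2 = N + 1 then f else μ ij.2) (X 0).1 (X 0).2 z) := by
    intro X z
    simp only [Pi.add_apply]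
    rw [dCob_zero_eval (fun x y z => A.br x y z) (fun x y m => A.br x y m)
        (fun a => g a) X z,
      delta_one_eval (fun x => φL x) (fun x => φL x) (fun a b c => f a b c) X z]
    rw [split3 N (fun ij =>
            ((if ij.1 = N + 1 then f else μ ij.1)
                ((if ij.2 = N + 1 then g else φ ij.2) (X 0).1) (X 0).2 z
              + (if ij.1 = N + 1 then f else μ ij.1) (X 0).1
                  ((if ij.2 = N + 1 then g else φ ij.2) (X 0).2) z
              + (if ij.1 = N + 1 then f else μ ij.1) (X 0).1 (X 0).2
                  ((if ij.2 = N + 1 then g else φ ij.2) z))),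
        split3 N (fun ij =>
            (if ij.1 = N + 1 then g else φ ij.1)
              ((if ij.2 = N + 1 then f else μ ij.2) (X 0).1 (X 0).2 z))]
    have hmidL :
        (∑ ij ∈ (Finset.HasAntidiagonal.antidiagonal (N + 1)).filter (fun q => q.1 ≠ 0 ∧ q.2 ≠ 0),
            ((if ij.1 = N + 1 then f else μ ij.1)
                ((if ij.2 = N + 1 then g else φ ij.2) (X 0).1) (X 0).2 z
              + (if ij.1 = N + 1 then f else μ ij.1) (X 0).1
                  ((if ij.2 = N + 1 then g else φ ij.2) (X 0).2) z
              + (if ij.1 = N + 1 then f else μ ij.1) (X 0).1 (X 0).2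
                  ((if ij.2 = N + 1 then g else φ ij.2) z)))
        = ∑ ij ∈ (Finset.HasAntidiagonal.antidiagonal (N + 1)).filter (fun q => q.1 ≠ 0 ∧ q.2 ≠ 0),
            (μ ij.1 (φ ij.2 (X 0).1) (X 0).2 z
              + μ ij.1 (X 0).1 (φ ij.2 (X 0).2) z
              + μ ij.1 (X 0).1 (X 0).2 (φ ij.2 z)) :=
      Finset.sum_congr rfl fun ij hij => by
        rw [if_neg (hmem ij hij).1, if_neg (hmem ij hij).2]
    have hmidR :
        (∑ ij ∈ (Finset.HasAntidiagonal.antidiagonal (N + 1)).filter (fun q => q.1 ≠ 0 ∧ q.2 ≠ 0),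
            (if ij.1 = N + 1 then g else φ ij.1)
              ((if ij.2 = N + 1 then f else μ ij.2) (X 0).1 (X 0).2 z))
        = ∑ ij ∈ (Finset.HasAntidiagonal.antidiagonal (N + 1)).filter (fun q => q.1 ≠ 0 ∧ q.2 ≠ 0),
            φ ij.1 (μ ij.2 (X 0).1 (X 0).2 z) :=
      Finset.sum_congr rfl fun ij hij => by
        rw [if_neg (hmem ij hij).1, if_neg (hmem ij hij).2]
    rw [hmidL, hmidR]
    simp only [if_neg hne, eq_self_iff_true, if_true, hμ0, hφ0, Ob2]
    have hsplit :
        (∑ ij ∈ (Finset.HasAntidiagonal.antidiagonal (N + 1)).filter (fun q => q.1 ≠ 0 ∧ q.2 ≠ 0),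
            (φ ij.1 (μ ij.2 (X 0).1 (X 0).2 z)
              - μ ij.1 (φ ij.2 (X 0).1) (X 0).2 z
              - μ ij.1 (X 0).1 (φ ij.2 (X 0).2) z
              - μ ij.1 (X 0).1 (X 0).2 (φ ij.2 z)))
        = (∑ ij ∈ (Finset.HasAntidiagonal.antidiagonal (N + 1)).filter (fun q => q.1 ≠ 0 ∧ q.2 ≠ 0),
            φ ij.1 (μ ij.2 (X 0).1 (X 0).2 z))
          - ∑ ij ∈ (Finset.HasAntidiagonal.antidiagonal (N + 1)).filter (fun q => q.1 ≠ 0 ∧ q.2 ≠ 0),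
            (μ ij.1 (φ ij.2 (X 0).1) (X 0).2 z
              + μ ij.1 (X 0).1 (φ ij.2 (X 0).2) z
              + μ ij.1 (X 0).1 (X 0).2 (φ ij.2 z)) := by
      rw [← Finset.sum_sub_distrib]
      exact Finset.sum_congr rfl fun ij _ => by abel
    rw [hsplit]
    rw [cyc (X 0).2 z (g (X 0).1), cyc (X 0).1 (g (X 0).2) z]
    abel
  constructor
  · intro h x y z
    have h2 := hpt ![(x, y)] z
    rw [h, sub_self] at h2
    have h3 := sub_eq_zero.mp h2.symm
    simpa using h3.symm
  · intro h
    funext X z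
    have h2 := hpt X z
    have h3 := h (X 0).1 (X 0).2 z
    rw [h3, sub_self] at h2
    exact sub_eq_zero.mp h2

/-- an order-`N` deformation `(μ_t, φ_t)` of a 3-LieDer pair extends
to an order-`(N+1)` deformation iff the obstruction class `[(Ob³, Ob²)]` vanishes,
i.e. iff there are a skew trilinear `f` and linear `g` with `d f = Ob³` and
`d g + δ f = Ob²`. -/
theorem extendable_iff_obstruction_trivial
    (K L : Type) [Field K] [AddCommGroup L] [Module K L]
    (A : ThreeLieAlgebra K L) (φL : L →ₗ[K] L) (hφL : IsDer A φL)
    (N : ℕ) (μ : ℕ → (L →ₗ[K] L →ₗ[K] L →ₗ[K] L)) (φ : ℕ → (L →ₗ[K] L))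
    (hdef : IsDeformationOfOrder N A φL μ φ) :
    (∃ (μN : L →ₗ[K] L →ₗ[K] L →ₗ[K] L) (φN : L →ₗ[K] L),
      IsDeformationOfOrder (N + 1) A φL
        (fun i => if i = N + 1 then μN else μ i)
        (fun i => if i = N + 1 then φN else φ i))
    ↔ (∃ (f : L →ₗ[K] L →ₗ[K] L →ₗ[K] L) (g : L →ₗ[K] L),
        (∀ x y z, f x y z = - f y x z) ∧ (∀ x y z, f x y z = - f x z y) ∧
        dCob (fun x y z => A.br x y z) (fun x y m => A.br x y m)
            ((fun X z => f (X 0).1 (X 0).2 z) : Cochain L L 1) = Ob3 μ N ∧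
        dCob (fun x y z => A.br x y z) (fun x y m => A.br x y m)
            ((fun _ z => g z) : Cochain L L 0)
          + deltaOp (fun x => φL x) (fun x => φL x)
              ((fun X z => f (X 0).1 (X 0).2 z) : Cochain L L 1)
          = Ob2 μ φ N) := by
  constructor
  · rintro ⟨μN, φN, D⟩
    refine ⟨μN, φN, ?_, ?_, ?_, ?_⟩
    · intro x y z; simpa using D.skew₁₂ (N + 1) x y z
    · intro x y z; simpa using D.skew₂₃ (N + 1) x y z
    · exact (key3 A N μ hdef.init_br μN).mpr (D.deform (N + 1) le_rfl)
    · exact (key2 A φL N μ φ hdef.init_br hdef.init_der μN φN).mpr (D.deriv (N + 1) le_rfl)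
  · rintro ⟨f, g, hf1, hf2, h3, h2⟩
    refine ⟨f, g, ?_, ?_, ?_, ?_, ?_, ?_, ?_⟩
    · show (if (0 : ℕ) = N + 1 then f else μ 0) = A.br
      rw [if_neg (by omega : ¬ (0 : ℕ) = N + 1)]; exact hdef.init_br
    · show (if (0 : ℕ) = N + 1 then g else φ 0) = φL
      rw [if_neg (by omega : ¬ (0 : ℕ) = N + 1)]; exact hdef.init_der
    · intro i hi
      constructor
      · show (if i = N + 1 then f else μ i) = 0
        rw [if_neg (by omega : ¬ i = N + 1)]
        exact (hdef.bound i (by omega)).1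
      · show (if i = N + 1 then g else φ i) = 0
        rw [if_neg (by omega : ¬ i = N + 1)]
        exact (hdef.bound i (by omega)).2
    · intro i x y z
      by_cases hi : i = N + 1
      · subst hi; simpa using hf1 x y z
      · simpa [hi] using hdef.skew₁₂ i x y z
    · intro i x y z
      by_cases hi : i = N + 1
      · subst hi; simpa using hf2 x y z
      · simpa [hi] using hdef.skew₂₃ i x y z
    · intro n hn
      by_cases hn' : n = N + 1
      · subst hn'; exact (key3 A N μ hdef.init_br f).mp h3
      · have hnN : n ≤ N := by omega
        intro x y z v w
        have e1 : ∀ ij ∈ Finset.HasAntidiagonal.antidiagonal n, ¬ ij.1 = N + 1 ∧ ¬ ij.2 = N + 1 := by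
          intro ij hij
          have := Finset.HasAntidiagonal.mem_antidiagonal.mp hij
          omega
        have L1 : (∑ ij ∈ Finset.HasAntidiagonal.antidiagonal n,
              (if ij.1 = N + 1 then f else μ ij.1) x y
                ((if ij.2 = N + 1 then f else μ ij.2) z v w))
            = ∑ ij ∈ Finset.HasAntidiagonal.antidiagonal n, μ ij.1 x y (μ ij.2 z v w) :=
          Finset.sum_congr rfl fun ij hij => by
            rw [if_neg (e1 ij hij).1, if_neg (e1 ij hij).2]
        have L2 : (∑ ij ∈ Finset.HasAntidiagonal.antidiagonal n,
              ((if ij.1 = N + 1 then f else μ ij.1)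
                  ((if ij.2 = N + 1 then f else μ ij.2) x y z) v w
                + (if ij.1 = N + 1 then f else μ ij.1) z
                    ((if ij.2 = N + 1 then f else μ ij.2) x y v) w
                + (if ij.1 = N + 1 then f else μ ij.1) z v
                    ((if ij.2 = N + 1 then f else μ ij.2) x y w)))
            = ∑ ij ∈ Finset.HasAntidiagonal.antidiagonal n,
                (μ ij.1 (μ ij.2 x y z) v w + μ ij.1 z (μ ij.2 x y v) w
                  + μ ij.1 z v (μ ij.2 x y w)) :=
          Finset.sum_congr rfl fun ij hij => by
            rw [if_neg (e1 ij hij).1, if_neg (e1 ij hij).2]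
        rw [L1, L2]
        exact hdef.deform n hnN x y z v w
    · intro n hn
      by_cases hn' : n = N + 1
      · subst hn'
        exact (key2 A φL N μ φ hdef.init_br hdef.init_der f g).mp h2
      · have hnN : n ≤ N := by omega
        intro x y z
        have e1 : ∀ ij ∈ Finset.HasAntidiagonal.antidiagonal n, ¬ ij.1 = N + 1 ∧ ¬ ij.2 = N + 1 := by
          intro ij hij
          have := Finset.HasAntidiagonal.mem_antidiagonal.mp hij
          omega
        have L1 : (∑ ij ∈ Finset.HasAntidiagonal.antidiagonal n,
              (if ij.1 = N + 1 then g else φ ij.1)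
                ((if ij.2 = N + 1 then f else μ ij.2) x y z))
            = ∑ ij ∈ Finset.HasAntidiagonal.antidiagonal n, φ ij.1 (μ ij.2 x y z) :=
          Finset.sum_congr rfl fun ij hij => by
            rw [if_neg (e1 ij hij).1, if_neg (e1 ij hij).2]
        have L2 : (∑ ij ∈ Finset.HasAntidiagonal.antidiagonal n,
              ((if ij.1 = N + 1 then f else μ ij.1)
                  ((if ij.2 = N + 1 then g else φ ij.2) x) y z
                + (if ij.1 = N + 1 then f else μ ij.1) x
                    ((if ij.2 = N + 1 then g else φ ij.2) y) z
                + (if ij.1 = N + 1 then f else μ ij.1) x y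
                    ((if ij.2 = N + 1 then g else φ ij.2) z)))
            = ∑ ij ∈ Finset.HasAntidiagonal.antidiagonal n,
                (μ ij.1 (φ ij.2 x) y z + μ ij.1 x (φ ij.2 y) z + μ ij.1 x y (φ ij.2 z)) :=
          Finset.sum_congr rfl fun ij hij => by
            rw [if_neg (e1 ij hij).1, if_neg (e1 ij hij).2]
        rw [L1, L2]
        exact hdef.deriv n hnN x y z
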